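/- Let A, B be bounded matrices with A Hermitian, and suppose k ∈ C¹(ℝ) has derivative k'(x) = ∫_{-∞}^{∞} ℓ(t) e^{itx} dt for some ℓ ∈ L¹(ℝ). Then ‖[k(A), B]‖ ≤ ‖ℓ‖_{L¹}·‖[A, B]‖. -/

import Mathlib

set_option maxHeartbeats 1000000

open scoped Matrix.Norms.L2Operator
open MeasureTheory

lemma norm_exp_I_mul (t x : ℝ) : ‖Complex.exp (Complex.I * t * x)‖ = 1 := by
  rw [show (Complex.I * t * x) = ((t * x : ℝ) : ℂ) * Complex.I by push_cast; ring]
  exact Complex.norm_exp_ofReal_mul_I _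

lemma aux_fubini_le (k : ℝ → ℝ) (ℓ : ℝ → ℂ) (hk : ContDiff ℝ 1 k) (hℓ : Integrable ℓ)
    (hrep : ∀ x : ℝ, ((deriv k x : ℝ) : ℂ) = ∫ t : ℝ, ℓ t * Complex.exp (Complex.I * t * x))
    (a b : ℝ) (hba : b ≤ a) :
    (∫ t : ℝ, ℓ t * ∫ x in b..a, Complex.exp (Complex.I * t * x)) = (k a : ℂ) - k b := by
  have hcont : Continuous (deriv k) := hk.continuous_deriv le_rfl
  have hint : Integrable (fun z : ℝ × ℝ => ℓ z.2 * Complex.exp (Complex.I * z.2 * z.1))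
      ((volume.restrict (Set.Ioc b a)).prod volume) := by
    have hmeas : AEStronglyMeasurable
        (fun z : ℝ × ℝ => ℓ z.2 * Complex.exp (Complex.I * z.2 * z.1))
        ((volume.restrict (Set.Ioc b a)).prod volume) := by
      apply AEStronglyMeasurable.mul (hℓ.1.comp_snd)
      exact (Complex.continuous_exp.comp (by fun_prop)).aestronglyMeasurable
    have hbound : Integrable (fun z : ℝ × ℝ => (1 : ℝ) * ‖ℓ z.2‖)
        ((volume.restrict (Set.Ioc b a)).prod volume) :=
      Integrable.mul_prod (integrableOn_const (C := (1:ℝ)) measure_Ioc_lt_top.ne) hℓ.norm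
    refine hbound.mono' hmeas ?_
    filter_upwards with z
    rw [norm_mul, norm_exp_I_mul]
    simp
  calc (∫ t : ℝ, ℓ t * ∫ x in b..a, Complex.exp (Complex.I * t * x))
      = ∫ t : ℝ, ∫ x in Set.Ioc b a, ℓ t * Complex.exp (Complex.I * t * x) := by
        congr 1; ext t
        rw [intervalIntegral.integral_of_le hba, MeasureTheory.integral_const_mul]
    _ = ∫ x in Set.Ioc b a, ∫ t : ℝ, ℓ t * Complex.exp (Complex.I * t * x) := by
        exact (MeasureTheory.integral_integral_swap hint).symm
    _ = ∫ x in Set.Ioc b a, ((deriv k x : ℝ) : ℂ) := by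
        congr 1; ext x; rw [hrep]
    _ = ∫ x in b..a, ((deriv k x : ℝ) : ℂ) := by
        rw [intervalIntegral.integral_of_le hba]
    _ = ((∫ x in b..a, deriv k x : ℝ) : ℂ) := intervalIntegral.integral_ofReal
    _ = (k a : ℂ) - k b := by
        rw [intervalIntegral.integral_deriv_eq_sub
          (fun x _ => (hk.differentiable one_ne_zero).differentiableAt)
          (hcont.intervalIntegrable b a)]
        push_cast; ring

lemma aux_fubini (k : ℝ → ℝ) (ℓ : ℝ → ℂ)
    (hfe : ∀ a b : ℝ, b ≤ a →
      (∫ t : ℝ, ℓ t * ∫ x in b..a, Complex.exp (Complex.I * t * x)) = (k a : ℂ) - k b)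
    (a b : ℝ) :
    (∫ t : ℝ, ℓ t * ∫ x in b..a, Complex.exp (Complex.I * t * x)) = (k a : ℂ) - k b := by
  rcases le_total b a with h | h
  · exact hfe a b h
  · have := hfe b a h
    calc (∫ t : ℝ, ℓ t * ∫ x in b..a, Complex.exp (Complex.I * t * x))
        = ∫ t : ℝ, -(ℓ t * ∫ x in a..b, Complex.exp (Complex.I * t * x)) := by
          congr 1; ext t; rw [intervalIntegral.integral_symm]; ring
      _ = -((k b : ℂ) - k a) := by rw [integral_neg, this]
      _ = (k a : ℂ) - k b := by ring

lemma inner_eval (t a b : ℝ) :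
    (∫ s in (0:ℝ)..1, Complex.exp (Complex.I * t * ((s : ℂ) * a + (1 - (s : ℂ)) * b)))
        * ((a : ℂ) - (b : ℂ)) = ∫ x in b..a, Complex.exp (Complex.I * t * x) := by
  by_cases hab : a = b
  · subst hab; simp
  by_cases ht : t = 0
  · subst ht
    simp only [Complex.ofReal_zero, mul_zero, zero_mul, Complex.exp_zero]
    rw [intervalIntegral.integral_const, intervalIntegral.integral_const]
    simp
  have hI : (Complex.I * t) ≠ 0 := by
    simp [Complex.I_ne_zero, Complex.ofReal_ne_zero, ht]
  have hsub : ((a : ℂ) - b) ≠ 0 := by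
    simpa [sub_eq_zero] using fun h => hab (by exact_mod_cast h)
  have hc : (Complex.I * t * ((a:ℂ) - b)) ≠ 0 := mul_ne_zero hI hsub
  have h1 : ∀ s : ℝ, Complex.I * t * ((s : ℂ) * a + (1 - (s : ℂ)) * b)
      = (Complex.I * t * ((a:ℂ) - b)) * s + Complex.I * t * b := by
    intro s; ring
  calc (∫ s in (0:ℝ)..1, Complex.exp (Complex.I * t * ((s : ℂ) * a + (1 - (s : ℂ)) * b)))
        * ((a : ℂ) - (b : ℂ))
      = (∫ s in (0:ℝ)..1, Complex.exp ((Complex.I * t * ((a:ℂ) - b)) * s)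
          * Complex.exp (Complex.I * t * b)) * ((a : ℂ) - (b : ℂ)) := by
        congr 1; apply intervalIntegral.integral_congr; intro s _
        simp only [h1 s, Complex.exp_add]
    _ = ((Complex.exp (Complex.I * t * ((a:ℂ) - b) * 1)
          - Complex.exp (Complex.I * t * ((a:ℂ) - b) * 0)) / (Complex.I * t * ((a:ℂ) - b)))
          * Complex.exp (Complex.I * t * b) * ((a : ℂ) - (b : ℂ)) := by
        rw [intervalIntegral.integral_mul_const, integral_exp_mul_complex hc]
        push_cast; ring_nf
    _ = ∫ x in b..a, Complex.exp (Complex.I * t * x) := by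
        rw [integral_exp_mul_complex hI]
        have he : Complex.exp (Complex.I * t * ((a:ℂ) - b)) * Complex.exp (Complex.I * t * b)
            = Complex.exp (Complex.I * t * a) := by
          rw [← Complex.exp_add]; ring_nf
        rw [mul_one, mul_zero, Complex.exp_zero, ← he]
        field_simp

lemma diag_exp_unitary {n : Type*} [Fintype n] [DecidableEq n] (v : n → ℝ) :
    (Matrix.diagonal fun i => Complex.exp (Complex.I * (v i : ℂ))) ∈ unitary (Matrix n n ℂ) := by
  have key : ∀ z w : ℂ, z = -w → Complex.exp z * Complex.exp w = 1 := by
    rintro z w rfl; rw [← Complex.exp_add]; simp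
  rw [Unitary.mem_iff]
  constructor <;>
  · simp only [Matrix.star_eq_conjTranspose, Matrix.diagonal_conjTranspose,
      Matrix.diagonal_mul_diagonal]
    rw [show (1 : Matrix n n ℂ) = Matrix.diagonal (fun _ : n => (1:ℂ)) from
      (Matrix.diagonal_one).symm]
    refine congrArg Matrix.diagonal (funext fun i => ?_)
    simp only [Pi.star_apply, RCLike.star_def, ← Complex.exp_conj, map_mul, Complex.conj_I,
      Complex.conj_ofReal]
    apply key _ _ ?_; ring

lemma norm_unitary_conj {n : Type*} [Fintype n] [DecidableEq n]
    (U X : Matrix n n ℂ) (hU : U ∈ unitary (Matrix n n ℂ)) :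
    ‖U * X * star U‖ = ‖X‖ := by
  rw [CStarRing.norm_mul_mem_unitary _ (Unitary.star_mem hU), CStarRing.norm_mem_unitary_mul _ hU]

lemma norm_diag_conj {n : Type*} [Fintype n] [DecidableEq n] (v w : n → ℝ) (K : Matrix n n ℂ) :
    ‖(Matrix.diagonal fun i => Complex.exp (Complex.I * (v i : ℂ))) * K *
      (Matrix.diagonal fun i => Complex.exp (Complex.I * (w i : ℂ)))‖ = ‖K‖ := by
  rw [Matrix.mul_assoc, CStarRing.norm_mem_unitary_mul _ (diag_exp_unitary v),
    CStarRing.norm_mul_mem_unitary _ (diag_exp_unitary w)]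

lemma conj_mul_conj {n : Type*} [Fintype n] [DecidableEq n]
    (U X Y : Matrix n n ℂ) (h : star U * U = 1) :
    (U * X * star U) * (U * Y * star U) = U * (X * Y) * star U := by
  have : star U * (U * (Y * star U)) = Y * star U := by rw [← Matrix.mul_assoc, h, Matrix.one_mul]
  simp only [Matrix.mul_assoc, this]

/-- entry evaluation as a continuous linear map -/
noncomputable def entryCLM {n : Type*} [Fintype n] [DecidableEq n] (i j : n) :
    Matrix n n ℂ →L[ℝ] ℂ :=
  LinearMap.toContinuousLinearMap
    ({ toFun := fun M => M i j, map_add' := fun _ _ => rfl,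
       map_smul' := fun _ _ => rfl } : Matrix n n ℂ →ₗ[ℝ] ℂ)

@[simp] lemma entryCLM_apply {n : Type*} [Fintype n] [DecidableEq n] (i j : n)
    (M : Matrix n n ℂ) : entryCLM i j M = M i j := rfl

/-- Functional calculus for a Hermitian matrix via its spectral decomposition. -/
noncomputable def hermCFC {n : Type*} [Fintype n] [DecidableEq n]
    {A : Matrix n n ℂ} (hA : A.IsHermitian) (f : ℝ → ℝ) : Matrix n n ℂ :=
  (hA.eigenvectorUnitary : Matrix n n ℂ) *
    Matrix.diagonal (fun i => (f (hA.eigenvalues i) : ℂ)) *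
    star (hA.eigenvectorUnitary : Matrix n n ℂ)

/-- If `k' (x) = ∫ ℓ(t) e^{itx} dt` with `ℓ ∈ L¹`, then `‖[k(A), B]‖ ≤ ‖ℓ‖₁ ‖[A, B]‖`. -/
theorem commutator_funcCalc_bound {n : Type*} [Fintype n] [DecidableEq n]
    {A : Matrix n n ℂ} (B : Matrix n n ℂ) (hA : A.IsHermitian)
    (k : ℝ → ℝ) (ℓ : ℝ → ℂ) (hk : ContDiff ℝ 1 k) (hℓ : Integrable ℓ)
    (hrep : ∀ x : ℝ, ((deriv k x : ℝ) : ℂ) = ∫ t : ℝ, ℓ t * Complex.exp (Complex.I * t * x)) :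
    ‖hermCFC hA k * B - B * hermCFC hA k‖ ≤ (∫ t : ℝ, ‖ℓ t‖) * ‖A * B - B * A‖ := by
  classical
  have hfub : ∀ a b : ℝ,
      (∫ t : ℝ, ℓ t * ∫ x in b..a, Complex.exp (Complex.I * t * x)) = (k a : ℂ) - k b :=
    aux_fubini k ℓ (fun a b hba => aux_fubini_le k ℓ hk hℓ hrep a b hba)
  set eig : n → ℝ := hA.eigenvalues with heig
  set Uc : Matrix n n ℂ := (hA.eigenvectorUnitary : Matrix n n ℂ) with hUc
  have hUmem : Uc ∈ unitary (Matrix n n ℂ) := hA.eigenvectorUnitary.2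
  have hU2 : star Uc * Uc = 1 := hUmem.1
  set D : Matrix n n ℂ := Matrix.diagonal (fun i => (eig i : ℂ)) with hD
  set Kd : Matrix n n ℂ := Matrix.diagonal (fun i => (k (eig i) : ℂ)) with hKd
  set C : Matrix n n ℂ := star Uc * B * Uc with hC
  set K : Matrix n n ℂ := D * C - C * D with hK
  have hB : Uc * C * star Uc = B := by
    have h1 : Uc * star Uc = 1 := hUmem.2
    simp only [hC, Matrix.mul_assoc]
    rw [show B * (Uc * star Uc) = B by rw [h1, Matrix.mul_one], ← Matrix.mul_assoc, h1,
      Matrix.one_mul]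
  have conj_comm : ∀ X : Matrix n n ℂ,
      (Uc * X * star Uc) * B - B * (Uc * X * star Uc) = Uc * (X * C - C * X) * star Uc := by
    intro X
    rw [← hB, conj_mul_conj Uc X C hU2, conj_mul_conj Uc C X hU2, Matrix.mul_sub, Matrix.sub_mul]
  have hcomm1 : hermCFC hA k * B - B * hermCFC hA k = Uc * (Kd * C - C * Kd) * star Uc :=
    conj_comm Kd
  have hcomm2 : A * B - B * A = Uc * K * star Uc := by
    have hAs : A = Uc * D * star Uc := by
      have h := hA.spectral_theorem
      rw [h]; rfl
    rw [hK, hAs, conj_comm D]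
  set μ : Measure (ℝ × ℝ) :=
    (volume : Measure ℝ).prod ((volume : Measure ℝ).restrict (Set.Ioc (0:ℝ) 1)) with hμ
  set G : ℝ × ℝ → Matrix n n ℂ := fun p =>
    ℓ p.1 • ((Matrix.diagonal fun i => Complex.exp (Complex.I * ((p.1 * (p.2 * eig i) : ℝ) : ℂ)))
      * K * (Matrix.diagonal fun i =>
        Complex.exp (Complex.I * ((p.1 * ((1 - p.2) * eig i) : ℝ) : ℂ)))) with hG
  have hGnorm : ∀ p : ℝ × ℝ, ‖G p‖ = ‖ℓ p.1‖ * ‖K‖ := by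
    intro p
    rw [hG, norm_smul, norm_diag_conj]
  have hGcont : Continuous (fun p : ℝ × ℝ =>
      (Matrix.diagonal fun i => Complex.exp (Complex.I * ((p.1 * (p.2 * eig i) : ℝ) : ℂ)))
      * K * (Matrix.diagonal fun i =>
        Complex.exp (Complex.I * ((p.1 * ((1 - p.2) * eig i) : ℝ) : ℂ)))) := by
    apply Continuous.matrix_mul
    apply Continuous.matrix_mul
    · exact Continuous.matrix_diagonal (continuous_pi fun i =>
        Complex.continuous_exp.comp (by fun_prop))
    · exact continuous_const
    · exact Continuous.matrix_diagonal (continuous_pi fun i =>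
        Complex.continuous_exp.comp (by fun_prop))
  have hGmeas : AEStronglyMeasurable G μ := (hℓ.1.comp_fst).smul hGcont.aestronglyMeasurable
  have hbound : Integrable (fun p : ℝ × ℝ => ‖ℓ p.1‖ * ‖K‖) μ :=
    Integrable.mul_prod hℓ.norm (integrableOn_const (C := ‖K‖) measure_Ioc_lt_top.ne)
  have hGint : Integrable G μ := by
    refine hbound.mono' hGmeas ?_
    filter_upwards with p
    rw [hGnorm p]
  set M : Matrix n n ℂ := ∫ p, G p ∂μ with hM
  have hMeq : M = Kd * C - C * Kd := by
    apply Matrix.ext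
    intro i j
    have hint_ij : Integrable (fun p : ℝ × ℝ => (G p) i j) μ :=
      (entryCLM i j).integrable_comp hGint
    have h1 : M i j = ∫ p, (G p) i j ∂μ :=
      ((entryCLM i j).integral_comp_comm hGint).symm
    have hKij : K i j = ((eig i : ℂ) - eig j) * C i j := by
      simp only [hK, hD, Matrix.sub_apply, Matrix.diagonal_mul, Matrix.mul_diagonal]
      ring
    have hGij : ∀ t s : ℝ, (G (t, s)) i j =
        ℓ t * (Complex.exp (Complex.I * (t:ℂ) * ((s : ℂ) * (eig i : ℂ) + (1 - (s : ℂ)) * (eig j : ℂ)))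
          * (((eig i : ℂ) - (eig j : ℂ)) * C i j)) := by
      intro t s
      have hx : Complex.exp (Complex.I * ((t * (s * eig i) : ℝ) : ℂ))
          * Complex.exp (Complex.I * ((t * ((1 - s) * eig j) : ℝ) : ℂ))
          = Complex.exp (Complex.I * (t:ℂ) * ((s : ℂ) * (eig i : ℂ) + (1 - (s : ℂ)) * (eig j : ℂ))) := by
        rw [← Complex.exp_add]
        congr 1
        push_cast
        ring
      simp only [hG, Matrix.smul_apply, smul_eq_mul, Matrix.mul_diagonal, Matrix.diagonal_mul,
        hKij]
      rw [← hx]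
      ring
    calc M i j = ∫ p, (G p) i j ∂μ := h1
      _ = ∫ t : ℝ, ∫ s in Set.Ioc (0:ℝ) 1, (G (t, s)) i j := by
          rw [hμ] at hint_ij ⊢
          exact MeasureTheory.integral_prod _ hint_ij
      _ = ∫ t : ℝ, ℓ t * ((∫ s in (0:ℝ)..1,
            Complex.exp (Complex.I * (t:ℂ) * ((s : ℂ) * (eig i : ℂ) + (1 - (s : ℂ)) * (eig j : ℂ))))
            * (((eig i : ℂ) - (eig j : ℂ)) * C i j)) := by
          congr 1; ext t
          rw [intervalIntegral.integral_of_le zero_le_one]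
          rw [← MeasureTheory.integral_mul_const, ← MeasureTheory.integral_const_mul]
          congr 1; ext s
          rw [hGij t s]
      _ = ∫ t : ℝ, (ℓ t * ∫ x in (eig j : ℝ)..(eig i : ℝ),
            Complex.exp (Complex.I * t * x)) * C i j := by
          congr 1; ext t
          rw [← inner_eval t (eig i) (eig j)]
          ring
      _ = (∫ t : ℝ, ℓ t * ∫ x in (eig j : ℝ)..(eig i : ℝ),
            Complex.exp (Complex.I * t * x)) * C i j := by
          rw [MeasureTheory.integral_mul_const]
      _ = ((k (eig i) : ℂ) - k (eig j)) * C i j := by rw [hfub]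
      _ = (Kd * C - C * Kd) i j := by
          simp only [hKd, Matrix.sub_apply, Matrix.diagonal_mul, Matrix.mul_diagonal]
          ring
  have hMle : ‖M‖ ≤ (∫ t : ℝ, ‖ℓ t‖) * ‖K‖ := by
    calc ‖M‖ ≤ ∫ p, ‖G p‖ ∂μ := norm_integral_le_integral_norm G
      _ = ∫ p : ℝ × ℝ, ‖ℓ p.1‖ * ‖K‖ ∂μ := by
          congr 1; ext p; exact hGnorm p
      _ = (∫ t : ℝ, ‖ℓ t‖) * ∫ s in Set.Ioc (0:ℝ) 1, ‖K‖ := by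
          rw [hμ]
          exact MeasureTheory.integral_prod_mul (fun t => ‖ℓ t‖) (fun _ => ‖K‖)
      _ = (∫ t : ℝ, ‖ℓ t‖) * ‖K‖ := by
          rw [MeasureTheory.setIntegral_const]
          simp [Real.volume_Ioc]
  calc ‖hermCFC hA k * B - B * hermCFC hA k‖ = ‖Kd * C - C * Kd‖ := by
        rw [hcomm1, norm_unitary_conj _ _ hUmem]
    _ = ‖M‖ := by rw [hMeq]
    _ ≤ (∫ t : ℝ, ‖ℓ t‖) * ‖K‖ := hMle
    _ = (∫ t : ℝ, ‖ℓ t‖) * ‖A * B - B * A‖ := by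
        rw [hcomm2, norm_unitary_conj _ _ hUmem]
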